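/- Let n ≥ 1, let R = ∏_{i=1}^n [a_i, b_i] be a compact rectangle in ℝⁿ, and let μ and ν be positive Borel measures that are finite on R. Then there exist a point θ = (θ₁,…,θ_n) ∈ R and, for each i, a labeling of the two closed subintervals [a_i, θ_i] and [θ_i, b_i] as I_i^* and I_i^{**} (so {I_i^*, I_i^{**}} = {[a_i,θ_i], [θ_i,b_i]}), such that the closed rectangles G := ∏_{i=1}^n I_i^* and H := ∏_{i=1}^n I_i^{**} satisfy μ(G) ≥ 2^{−n} μ(R) and ν(H) ≥ 2^{−n} ν(R). In particular G ∩ H = {θ}, and G and H lie in closed opposite n-ants with common vertex θ. -/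

import Mathlib

open MeasureTheory
open scoped ENNReal NNReal

noncomputable section

open Set Filter

lemma exists_median {α : Type*} [MeasurableSpace α] (μ : Measure α) (A : Set α)
    (hA : MeasurableSet A) (hfin : μ A ≠ ⊤) (f : α → ℝ) (hf : Measurable f)
    (a b : ℝ) (hab : a ≤ b) (h1 : ∀ x ∈ A, a ≤ f x) (h2 : ∀ x ∈ A, f x ≤ b) :
    ∃ θ, a ≤ θ ∧ θ ≤ b ∧ μ A / 2 ≤ μ (A ∩ {x | f x ≤ θ}) ∧
      μ A / 2 ≤ μ (A ∩ {x | θ ≤ f x}) := by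
  set S : Set ℝ := {t | t ∈ Set.Icc a b ∧ μ A / 2 ≤ μ (A ∩ {x | f x ≤ t})} with hS
  have hbS : b ∈ S := by
    constructor
    · exact ⟨hab, le_rfl⟩
    · have : A ∩ {x | f x ≤ b} = A := by
        ext x; exact ⟨fun h => h.1, fun h => ⟨h, h2 x h⟩⟩
      rw [this]
      exact ENNReal.half_le_self
  have hSne : S.Nonempty := ⟨b, hbS⟩
  have hSbdd : BddBelow S := ⟨a, fun t ht => ht.1.1⟩
  set θ := sInf S with hθ
  have hθa : a ≤ θ := le_csInf hSne fun t ht => ht.1.1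
  have hθb : θ ≤ b := csInf_le hSbdd hbS
  refine ⟨θ, hθa, hθb, ?_, ?_⟩
  · -- upper half: continuity from above
    obtain ⟨u, hu_anti, hu_tend, hu_mem⟩ := exists_seq_tendsto_sInf hSne hSbdd
    have hCa : Antitone fun k => A ∩ {x | f x ≤ u k} := fun j k hjk =>
      inter_subset_inter_right _ fun x hx => le_trans hx (hu_anti hjk)
    have hCm : ∀ k, MeasurableSet (A ∩ {x | f x ≤ u k}) := fun k =>
      hA.inter (hf measurableSet_Iic)
    have hiI : ⋂ k, (A ∩ {x | f x ≤ u k}) = A ∩ {x | f x ≤ θ} := by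
      ext x
      simp only [mem_iInter, mem_inter_iff, mem_setOf_eq]
      constructor
      · intro h
        refine ⟨(h 0).1, ?_⟩
        exact ge_of_tendsto hu_tend (Eventually.of_forall fun k => (h k).2)
      · intro h k
        exact ⟨h.1, le_trans h.2 (csInf_le hSbdd (hu_mem k))⟩
    have := Antitone.measure_iInter (μ := μ) hCa (fun k => (hCm k).nullMeasurableSet)
      ⟨0, ne_top_of_le_ne_top hfin (measure_mono inter_subset_left)⟩
    rw [hiI] at this
    rw [this]
    exact le_iInf fun k => (hu_mem k).2
  · -- lower half
    have hDle : μ (A ∩ {x | f x < θ}) ≤ μ A / 2 := by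
      rcases eq_or_lt_of_le hθa with h | h
      · have : A ∩ {x | f x < θ} = ∅ := by
          ext x
          simp only [mem_inter_iff, mem_setOf_eq, mem_empty_iff_false, iff_false, not_and,
            not_lt]
          intro hx
          exact h ▸ h1 x hx
        simp [this]
      · -- a < θ; approximate from below
        set v : ℕ → ℝ := fun k => θ - (θ - a) / (k + 1) with hv
        have hva : ∀ k, a ≤ v k := by
          intro k
          have h1k : (θ - a) / (k + 1) ≤ θ - a := by
            apply div_le_self (by linarith)
            have := Nat.cast_nonneg (α := ℝ) k
            linarith
          simp only [hv]; linarith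
        have hvθ : ∀ k, v k < θ := by
          intro k
          have : 0 < (θ - a) / (k + 1) := div_pos (by linarith) (by positivity)
          simp only [hv]; linarith
        have hvmono : Monotone v := by
          intro j k hjk
          have hpos : (0:ℝ) < θ - a := by linarith
          have hjk' : (j:ℝ) ≤ (k:ℝ) := Nat.cast_le.mpr hjk
          simp only [hv, sub_le_sub_iff_left]
          refine div_le_div_of_nonneg_left (by linarith) ?_ (by linarith)
          positivity
        have hunion : A ∩ {x | f x < θ} = ⋃ k, (A ∩ {x | f x ≤ v k}) := by
          ext x
          simp only [mem_iUnion, mem_inter_iff, mem_setOf_eq]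
          constructor
          · rintro ⟨hxA, hxf⟩
            have hd : 0 < θ - f x := by linarith
            obtain ⟨N, hN⟩ := exists_nat_ge ((θ - a) / (θ - f x))
            refine ⟨N, hxA, ?_⟩
            have : (θ - a) / (N + 1) ≤ θ - f x := by
              rw [div_le_iff₀ (by positivity)]
              have h3 : θ - a ≤ (N:ℝ) * (θ - f x) := (div_le_iff₀ hd).mp hN
              nlinarith [hd.le]
            simp only [hv]; linarith
          · rintro ⟨k, hxA, hxf⟩
            exact ⟨hxA, lt_of_le_of_lt hxf (hvθ k)⟩
        rw [hunion]
        have hdir : Directed (· ⊆ ·) fun k => A ∩ {x | f x ≤ v k} := by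
          apply Monotone.directed_le
          intro j k hjk
          exact inter_subset_inter_right _ fun x hx => le_trans hx (hvmono hjk)
        rw [Directed.measure_iUnion (μ := μ) hdir]
        apply iSup_le
        intro k
        by_contra hcon
        push_neg at hcon
        have hvk_notin : v k ∉ S := by
          intro hmem
          exact absurd (csInf_le hSbdd hmem) (not_le.mpr (hvθ k))
        exact hvk_notin ⟨⟨hva k, le_trans (hvθ k).le hθb⟩, hcon.le⟩
    -- now conclude
    have hcover : μ A ≤ μ (A ∩ {x | θ ≤ f x}) + μ (A ∩ {x | f x < θ}) := by
      have : A ⊆ (A ∩ {x | θ ≤ f x}) ∪ (A ∩ {x | f x < θ}) := by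
        intro x hx
        rcases le_or_gt θ (f x) with h | h
        · exact Or.inl ⟨hx, h⟩
        · exact Or.inr ⟨hx, h⟩
      exact le_trans (measure_mono this) (measure_union_le _ _)
    by_contra hcon
    push_neg at hcon
    have hhalf_ne : μ A / 2 ≠ ⊤ := by
      simp [ENNReal.div_eq_top, hfin]
    have : μ A < μ A / 2 + μ A / 2 := by
      calc μ A ≤ μ (A ∩ {x | θ ≤ f x}) + μ (A ∩ {x | f x < θ}) := hcover
      _ < μ A / 2 + μ A / 2 :=
        ENNReal.add_lt_add_of_lt_of_le
          (ne_top_of_le_ne_top hfin (measure_mono inter_subset_left)) hcon hDle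
    rw [ENNReal.add_halves] at this
    exact lt_irrefl _ this

lemma exists_step {α : Type*} [MeasurableSpace α] (μ ν : Measure α) (A B : Set α)
    (hA : MeasurableSet A) (hAfin : μ A ≠ ⊤) (hBfin : ν B ≠ ⊤)
    (f : α → ℝ) (hf : Measurable f) (a b : ℝ) (hab : a ≤ b)
    (hA1 : ∀ x ∈ A, a ≤ f x) (hA2 : ∀ x ∈ A, f x ≤ b) :
    ∃ θ, a ≤ θ ∧ θ ≤ b ∧ ∃ s : Bool,
      μ A / 2 ≤ μ (A ∩ {x | if s then f x ≤ θ else θ ≤ f x}) ∧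
      ν B / 2 ≤ ν (B ∩ {x | if s then θ ≤ f x else f x ≤ θ}) := by
  obtain ⟨θ, hθa, hθb, hup, hlo⟩ := exists_median μ A hA hAfin f hf a b hab hA1 hA2
  by_cases h : ν B / 2 ≤ ν (B ∩ {x | θ ≤ f x})
  · exact ⟨θ, hθa, hθb, true, by simpa using hup, by simpa using h⟩
  · refine ⟨θ, hθa, hθb, false, by simpa using hlo, ?_⟩
    simp only [Bool.false_eq_true, if_false]
    by_contra hcon
    push_neg at hcon h
    have hcover : ν B ≤ ν (B ∩ {x | θ ≤ f x}) + ν (B ∩ {x | f x ≤ θ}) := by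
      refine le_trans (measure_mono fun x hx => ?_) (measure_union_le _ _)
      rcases le_total θ (f x) with hle | hle
      · exact Or.inl ⟨hx, hle⟩
      · exact Or.inr ⟨hx, hle⟩
    have : ν B < ν B / 2 + ν B / 2 :=
      lt_of_le_of_lt hcover (ENNReal.add_lt_add h hcon)
    rw [ENNReal.add_halves] at this
    exact lt_irrefl _ this

/-- Bisection of a compact rectangle `R = ∏ [aᵢ,bᵢ]` for two finite
measures: there is a point `θ ∈ R` and a labeling (given by `s : Fin n → Bool`) of the two
closed subintervals `[aᵢ,θᵢ]`, `[θᵢ,bᵢ]` as `Iᵢ*` and `Iᵢ**` such that the rectangles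
`G = ∏ Iᵢ*` and `H = ∏ Iᵢ**` satisfy `μ(G) ≥ 2^{−n} μ(R)` and `ν(H) ≥ 2^{−n} ν(R)`;
moreover `G ∩ H = {θ}`, so `G` and `H` lie in closed opposite `n`-ants with vertex `θ`. -/
theorem statement3 (n : ℕ) (hn : 1 ≤ n) (a b : Fin n → ℝ) (hab : ∀ i, a i ≤ b i)
    (μ ν : Measure (EuclideanSpace ℝ (Fin n)))
    (R : Set (EuclideanSpace ℝ (Fin n)))
    (hR : R = {x | ∀ i, x i ∈ Set.Icc (a i) (b i)})
    (hμ : μ R ≠ ⊤) (hν : ν R ≠ ⊤) :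
    ∃ θ : EuclideanSpace ℝ (Fin n), θ ∈ R ∧
      ∃ s : Fin n → Bool,
        μ R / 2 ^ n
            ≤ μ {x | ∀ i, if s i then x i ∈ Set.Icc (a i) (θ i)
                else x i ∈ Set.Icc (θ i) (b i)} ∧
        ν R / 2 ^ n
            ≤ ν {x | ∀ i, if s i then x i ∈ Set.Icc (θ i) (b i)
                else x i ∈ Set.Icc (a i) (θ i)} ∧
        {x : EuclideanSpace ℝ (Fin n) | ∀ i, if s i then x i ∈ Set.Icc (a i) (θ i)
              else x i ∈ Set.Icc (θ i) (b i)} ∩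
            {x | ∀ i, if s i then x i ∈ Set.Icc (θ i) (b i)
              else x i ∈ Set.Icc (a i) (θ i)} = {θ} ∧
        -- `G` and `H` lie in the closed opposite `n`-ants at `θ`
        {x : EuclideanSpace ℝ (Fin n) | ∀ i, if s i then x i ∈ Set.Icc (a i) (θ i)
              else x i ∈ Set.Icc (θ i) (b i)}
            ⊆ {x | ∀ i, if s i then x i ≤ θ i else θ i ≤ x i} ∧
        {x : EuclideanSpace ℝ (Fin n) | ∀ i, if s i then x i ∈ Set.Icc (θ i) (b i)
              else x i ∈ Set.Icc (a i) (θ i)}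
            ⊆ {x | ∀ i, if s i then θ i ≤ x i else x i ≤ θ i} := by
  subst hR
  set R : Set (EuclideanSpace ℝ (Fin n)) := {x | ∀ i, x i ∈ Set.Icc (a i) (b i)} with hRdef
  have hev : ∀ i : Fin n, Measurable fun x : EuclideanSpace ℝ (Fin n) => x i :=
    fun i => (EuclideanSpace.proj i).continuous.measurable
  have hRmeas : MeasurableSet R := by
    have : R = ⋂ i, (fun x : EuclideanSpace ℝ (Fin n) => x i) ⁻¹' Set.Icc (a i) (b i) := by
      ext x; simp [hRdef]
    rw [this]
    exact MeasurableSet.iInter fun i => (hev i) measurableSet_Icc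
  -- the two families of sets
  have key : ∀ k : ℕ, k ≤ n → ∃ θ : Fin n → ℝ, ∃ s : Fin n → Bool,
      (∀ i, a i ≤ θ i ∧ θ i ≤ b i) ∧
      μ R / 2 ^ k ≤ μ {x | x ∈ R ∧ ∀ j : Fin n, (j : ℕ) < k →
          (if s j then x j ∈ Set.Icc (a j) (θ j) else x j ∈ Set.Icc (θ j) (b j))} ∧
      ν R / 2 ^ k ≤ ν {x | x ∈ R ∧ ∀ j : Fin n, (j : ℕ) < k →
          (if s j then x j ∈ Set.Icc (θ j) (b j) else x j ∈ Set.Icc (a j) (θ j))} := by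
    intro k
    induction k with
    | zero =>
      intro _
      refine ⟨a, fun _ => true, fun i => ⟨le_rfl, hab i⟩, ?_, ?_⟩ <;>
      · rw [pow_zero, div_one]
        exact measure_mono fun x hx => ⟨hx, fun j hj => absurd hj (Nat.not_lt_zero _)⟩
    | succ k ih =>
      intro hk1
      obtain ⟨θ, s, hθ, hμk, hνk⟩ := ih (Nat.le_of_succ_le hk1)
      have hkn : k < n := hk1
      set i : Fin n := ⟨k, hkn⟩ with hidef
      set A : Set (EuclideanSpace ℝ (Fin n)) := {x | x ∈ R ∧ ∀ j : Fin n, (j : ℕ) < k →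
          (if s j then x j ∈ Set.Icc (a j) (θ j) else x j ∈ Set.Icc (θ j) (b j))} with hAdef
      set B : Set (EuclideanSpace ℝ (Fin n)) := {x | x ∈ R ∧ ∀ j : Fin n, (j : ℕ) < k →
          (if s j then x j ∈ Set.Icc (θ j) (b j) else x j ∈ Set.Icc (a j) (θ j))} with hBdef
      have hAsubR : A ⊆ R := fun x hx => hx.1
      have hBsubR : B ⊆ R := fun x hx => hx.1
      have hAmeas : MeasurableSet A := by
        have : A = R ∩ ⋂ (j : Fin n), ⋂ (_ : (j : ℕ) < k),
            {x : EuclideanSpace ℝ (Fin n) |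
              if s j then x j ∈ Set.Icc (a j) (θ j) else x j ∈ Set.Icc (θ j) (b j)} := by
          ext x
          simp only [hAdef, Set.mem_setOf_eq, Set.mem_inter_iff, Set.mem_iInter]
        rw [this]
        refine hRmeas.inter (MeasurableSet.iInter fun j => MeasurableSet.iInter fun _ => ?_)
        by_cases hs : s j <;> simp only [hs, if_true, Bool.false_eq_true, if_false] <;>
          exact (hev j) measurableSet_Icc
      have hAfin : μ A ≠ ⊤ := ne_top_of_le_ne_top hμ (measure_mono hAsubR)
      have hBfin : ν B ≠ ⊤ := ne_top_of_le_ne_top hν (measure_mono hBsubR)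
      obtain ⟨θi, hθia, hθib, si, hμs, hνs⟩ :=
        exists_step μ ν A B hAmeas hAfin hBfin (fun x => x i) (hev i) (a i) (b i) (hab i)
          (fun x hx => (hx.1 i).1) (fun x hx => (hx.1 i).2)
      refine ⟨Function.update θ i θi, Function.update s i si, ?_, ?_, ?_⟩
      · intro j
        rcases eq_or_ne j i with rfl | hji
        · simp [hθia, hθib]
        · simp [Function.update_of_ne hji, hθ j]
      · -- μ bound
        have hset : {x : EuclideanSpace ℝ (Fin n) | x ∈ R ∧ ∀ j : Fin n, (j : ℕ) < k + 1 →
            (if Function.update s i si j then x j ∈ Set.Icc (a j) (Function.update θ i θi j)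
              else x j ∈ Set.Icc (Function.update θ i θi j) (b j))}
            = A ∩ {x | if si then (x i : ℝ) ≤ θi else θi ≤ x i} := by
          ext x
          simp only [Set.mem_setOf_eq, Set.mem_inter_iff, hAdef]
          constructor
          · rintro ⟨hxR, hcond⟩
            have hji : ∀ j : Fin n, (j : ℕ) < k → j ≠ i := by
              intro j hj hji; rw [hji, hidef] at hj; exact lt_irrefl _ hj
            refine ⟨⟨hxR, fun j hj => ?_⟩, ?_⟩
            · have := hcond j (Nat.lt_succ_of_lt hj)
              rwa [Function.update_of_ne (hji j hj), Function.update_of_ne (hji j hj)] at this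
            · have := hcond i (by rw [hidef]; exact Nat.lt_succ_self k)
              rw [Function.update_self, Function.update_self] at this
              by_cases hsi : si
              · simp only [hsi, if_true] at this ⊢; exact this.2
              · simp only [hsi, Bool.false_eq_true, if_false] at this ⊢; exact this.1
          · rintro ⟨⟨hxR, hcond⟩, hside⟩
            refine ⟨hxR, fun j hj => ?_⟩
            rcases Nat.lt_succ_iff_lt_or_eq.mp hj with hj' | hj'
            · have hji : j ≠ i := by
                intro hji; rw [hji, hidef] at hj'; exact lt_irrefl _ hj'
              rw [Function.update_of_ne hji, Function.update_of_ne hji]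
              exact hcond j hj'
            · have hji : j = i := Fin.ext (by rw [hidef]; exact hj')
              subst hji
              rw [Function.update_self, Function.update_self]
              by_cases hsi : si
              · simp only [hsi, if_true] at hside ⊢
                exact ⟨(hxR i).1, hside⟩
              · simp only [hsi, Bool.false_eq_true, if_false] at hside ⊢
                exact ⟨hside, (hxR i).2⟩
        rw [hset]
        have hpow : μ R / 2 ^ (k + 1) = μ R / 2 ^ k / 2 := by
          rw [pow_succ, div_eq_mul_inv, div_eq_mul_inv, div_eq_mul_inv,
            ENNReal.mul_inv (Or.inl (by positivity)) (Or.inl (by simp)), mul_assoc]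
        rw [hpow]
        exact le_trans (ENNReal.div_le_div_right hμk 2) hμs
      · -- ν bound
        have hset : {x : EuclideanSpace ℝ (Fin n) | x ∈ R ∧ ∀ j : Fin n, (j : ℕ) < k + 1 →
            (if Function.update s i si j then x j ∈ Set.Icc (Function.update θ i θi j) (b j)
              else x j ∈ Set.Icc (a j) (Function.update θ i θi j))}
            = B ∩ {x | if si then θi ≤ (x i : ℝ) else x i ≤ θi} := by
          ext x
          simp only [Set.mem_setOf_eq, Set.mem_inter_iff, hBdef]
          constructor
          · rintro ⟨hxR, hcond⟩
            have hji : ∀ j : Fin n, (j : ℕ) < k → j ≠ i := by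
              intro j hj hji; rw [hji, hidef] at hj; exact lt_irrefl _ hj
            refine ⟨⟨hxR, fun j hj => ?_⟩, ?_⟩
            · have := hcond j (Nat.lt_succ_of_lt hj)
              rwa [Function.update_of_ne (hji j hj), Function.update_of_ne (hji j hj)] at this
            · have := hcond i (by rw [hidef]; exact Nat.lt_succ_self k)
              rw [Function.update_self, Function.update_self] at this
              by_cases hsi : si
              · simp only [hsi, if_true] at this ⊢; exact this.1
              · simp only [hsi, Bool.false_eq_true, if_false] at this ⊢; exact this.2
          · rintro ⟨⟨hxR, hcond⟩, hside⟩
            refine ⟨hxR, fun j hj => ?_⟩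
            rcases Nat.lt_succ_iff_lt_or_eq.mp hj with hj' | hj'
            · have hji : j ≠ i := by
                intro hji; rw [hji, hidef] at hj'; exact lt_irrefl _ hj'
              rw [Function.update_of_ne hji, Function.update_of_ne hji]
              exact hcond j hj'
            · have hji : j = i := Fin.ext (by rw [hidef]; exact hj')
              subst hji
              rw [Function.update_self, Function.update_self]
              by_cases hsi : si
              · simp only [hsi, if_true] at hside ⊢
                exact ⟨hside, (hxR i).2⟩
              · simp only [hsi, Bool.false_eq_true, if_false] at hside ⊢
                exact ⟨(hxR i).1, hside⟩
        rw [hset]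
        have hpow : ν R / 2 ^ (k + 1) = ν R / 2 ^ k / 2 := by
          rw [pow_succ, div_eq_mul_inv, div_eq_mul_inv, div_eq_mul_inv,
            ENNReal.mul_inv (Or.inl (by positivity)) (Or.inl (by simp)), mul_assoc]
        rw [hpow]
        exact le_trans (ENNReal.div_le_div_right hνk 2) hνs
  obtain ⟨θ, s, hθ, hμn, hνn⟩ := key n le_rfl
  have hθR : (WithLp.toLp 2 θ : EuclideanSpace ℝ (Fin n)) ∈ R := fun i => ⟨(hθ i).1, (hθ i).2⟩
  refine ⟨WithLp.toLp 2 θ, hθR, s, ?_, ?_, ?_, ?_, ?_⟩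
  · exact le_trans hμn (measure_mono fun x hx i => hx.2 i i.isLt)
  · exact le_trans hνn (measure_mono fun x hx i => hx.2 i i.isLt)
  · ext x
    simp only [Set.mem_inter_iff, Set.mem_setOf_eq, Set.mem_singleton_iff]
    constructor
    · rintro ⟨hG, hH⟩
      ext i
      have h1 := hG i; have h2 := hH i
      by_cases hsi : s i
      · simp only [hsi, if_true] at h1 h2
        exact le_antisymm h1.2 h2.1
      · simp only [hsi, Bool.false_eq_true, if_false] at h1 h2
        exact le_antisymm h2.2 h1.1
    · rintro rfl
      constructor <;> intro i <;> by_cases hsi : s i <;>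
        simp [hsi, (hθ i).1, (hθ i).2]
  · intro x hx i
    have h := hx i
    by_cases hsi : s i <;> simp only [hsi, if_true, Bool.false_eq_true, if_false] at h ⊢
    · exact h.2
    · exact h.1
  · intro x hx i
    have h := hx i
    by_cases hsi : s i <;> simp only [hsi, if_true, Bool.false_eq_true, if_false] at h ⊢
    · exact h.1
    · exact h.2
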